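/- Monotonicity of generalized rank weights: For an [n,k] non-degenerate linear rank metric code C over F_{q^m} with generalized rank weights d_r(C) = min{dim_{F_q} S_q(D) : D ≤ C, dim D = r}, one has 0 < d_1(C) < d_2(C) < ... < d_k(C) = n. -/

import Mathlib

open Matrix

section Aux

variable {Fq Fqm : Type*} [Field Fq] [Field Fqm] [Algebra Fq Fqm] {n : ℕ}

/-- The `Fqm`-linear functional `x ↦ ∑ c j * x j` for `c : Fin n → Fq`. -/
noncomputable def grwPhi (c : Fin n → Fq) : (Fin n → Fqm) →ₗ[Fqm] Fqm where
  toFun x := ∑ j, algebraMap Fq Fqm (c j) * x j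
  map_add' x y := by
    simp [mul_add, Finset.sum_add_distrib]
  map_smul' a x := by
    simp only [Pi.smul_apply, smul_eq_mul, RingHom.id_apply, Finset.mul_sum]
    exact Finset.sum_congr rfl fun j _ => by ring

/-- The `Fq`-linear map sending `c` to the corresponding combination of columns of `b`. -/
noncomputable def grwPsi (s : ℕ) (b : Fin s → Fin n → Fqm) :
    (Fin n → Fq) →ₗ[Fq] (Fin s → Fqm) where
  toFun c := fun i => ∑ j, algebraMap Fq Fqm (c j) * b i j
  map_add' x y := by
    funext i
    simp [add_mul, Finset.sum_add_distrib]
  map_smul' a x := by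
    funext i
    simp only [Pi.smul_apply, smul_eq_mul, RingHom.id_apply, Algebra.smul_def, Finset.mul_sum]
    refine Finset.sum_congr rfl fun j _ => ?_
    rw [_root_.map_mul]; ring

lemma grwPsi_apply (s : ℕ) (b : Fin s → Fin n → Fqm) (c : Fin n → Fq) (i : Fin s) :
    grwPsi (Fq := Fq) s b c i = grwPhi c (b i) := rfl

lemma grwPsi_range (s : ℕ) (b : Fin s → Fin n → Fqm) :
    LinearMap.range (grwPsi (Fq := Fq) s b) =
      Submodule.span Fq (Set.range fun j : Fin n => fun i : Fin s => b i j) := by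
  apply le_antisymm
  · rintro x ⟨c, rfl⟩
    have hx : grwPsi (Fq := Fq) s b c = ∑ j, c j • (fun i : Fin s => b i j) := by
      funext i
      simp [grwPsi, Algebra.smul_def]
    rw [hx]
    exact Submodule.sum_mem _ fun j _ =>
      Submodule.smul_mem _ _ (Submodule.subset_span ⟨j, rfl⟩)
  · rw [Submodule.span_le]
    rintro x ⟨j, rfl⟩
    refine ⟨Pi.single j 1, ?_⟩
    funext i
    simp [grwPsi, Pi.single_apply, apply_ite (algebraMap Fq Fqm)]

lemma grwPsi_rank_nullity (s : ℕ) (b : Fin s → Fin n → Fqm) :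
    Module.finrank Fq
      (Submodule.span Fq (Set.range fun j : Fin n => fun i : Fin s => b i j)) +
      Module.finrank Fq (LinearMap.ker (grwPsi (Fq := Fq) s b)) = n := by
  have h := LinearMap.finrank_range_add_finrank_ker (grwPsi (Fq := Fq) s b)
  rw [grwPsi_range, Module.finrank_fin_fun] at h
  exact h

lemma grwKer_iff (s : ℕ) (b : Fin s → Fin n → Fqm) (c : Fin n → Fq) :
    c ∈ LinearMap.ker (grwPsi (Fq := Fq) s b) ↔
      Submodule.span Fqm (Set.range b) ≤ LinearMap.ker (grwPhi (Fqm := Fqm) c) := by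
  constructor
  · intro hc
    rw [Submodule.span_le]
    rintro x ⟨i, rfl⟩
    have := congrFun (LinearMap.mem_ker.mp hc) i
    simpa [grwPsi_apply] using this
  · intro h
    ext i
    have : b i ∈ Submodule.span Fqm (Set.range b) := Submodule.subset_span ⟨i, rfl⟩
    simpa [grwPsi_apply] using h this

/-- Existence of a linearly independent family of size `r ≤ finrank C` inside `C`. -/
lemma grw_set_nonempty {k : ℕ} (C : Submodule Fqm (Fin n → Fqm))
    (hCk : Module.finrank Fqm C = k) (hk : 0 < k) (r : ℕ) (hr : r ≤ k) :
    ∃ b : Fin r → Fin n → Fqm, LinearIndependent Fqm b ∧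
      Submodule.span Fqm (Set.range b) ≤ C := by
  haveI : FiniteDimensional Fqm C :=
    Module.finite_of_finrank_pos (by rw [hCk]; exact hk)
  let bC : Module.Basis (Fin k) Fqm C := Module.finBasisOfFinrankEq Fqm C hCk
  refine ⟨fun i => (bC (Fin.castLE hr i) : Fin n → Fqm), ?_, ?_⟩
  · have h1 : LinearIndependent Fqm fun i : Fin r => bC (Fin.castLE hr i) :=
      bC.linearIndependent.comp _ (Fin.castLE_injective hr)
    exact h1.map' C.subtype C.ker_subtype
  · rw [Submodule.span_le]
    rintro x ⟨i, rfl⟩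
    exact (bC (Fin.castLE hr i)).2

/-- The key step: from an `(r+1)`-dimensional subcode one can extract an `r`-dimensional
subcode whose `grwPsi`-kernel is strictly larger. -/
lemma grw_step (C : Submodule Fqm (Fin n → Fqm)) (r : ℕ)
    (b : Fin (r + 1) → Fin n → Fqm) (hLI : LinearIndependent Fqm b)
    (hle : Submodule.span Fqm (Set.range b) ≤ C) :
    ∃ b' : Fin r → Fin n → Fqm, LinearIndependent Fqm b' ∧
      Submodule.span Fqm (Set.range b') ≤ C ∧
      Module.finrank Fq (LinearMap.ker (grwPsi (Fq := Fq) (r + 1) b)) <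
        Module.finrank Fq (LinearMap.ker (grwPsi (Fq := Fq) r b')) := by
  -- choose `c` such that `grwPhi c` does not vanish on `span b`
  have hker_ne_top : LinearMap.ker (grwPsi (Fq := Fq) (r + 1) b) ≠ ⊤ := by
    intro htop
    have hb0 : b 0 = 0 := by
      funext j
      have h1 : Pi.single j 1 ∈ LinearMap.ker (grwPsi (Fq := Fq) (r + 1) b) :=
        htop ▸ trivial
      have h2 := congrFun (LinearMap.mem_ker.mp h1) 0
      simpa [grwPsi, Pi.single_apply, apply_ite (algebraMap Fq Fqm)] using h2
    exact hLI.ne_zero 0 hb0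
  obtain ⟨c, hc⟩ : ∃ c, c ∉ LinearMap.ker (grwPsi (Fq := Fq) (r + 1) b) := by
    by_contra h
    push_neg at h
    exact hker_ne_top (Submodule.eq_top_iff'.mpr h)
  obtain ⟨i0, hi0⟩ : ∃ i0 : Fin (r + 1), grwPhi (Fqm := Fqm) c (b i0) ≠ 0 := by
    by_contra hcon
    push_neg at hcon
    apply hc
    rw [LinearMap.mem_ker]
    funext i
    simpa [grwPsi_apply] using hcon i
  have hDrank : Module.finrank Fqm (Submodule.span Fqm (Set.range b)) = r + 1 := by
    rw [finrank_span_eq_card hLI, Fintype.card_fin]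
  -- the kernel of `grwPhi c` is a hyperplane of the ambient space
  have hphi_surj : LinearMap.range (grwPhi (Fqm := Fqm) c) = ⊤ := by
    rw [LinearMap.range_eq_top]
    intro y
    refine ⟨(y / grwPhi c (b i0)) • b i0, ?_⟩
    rw [_root_.map_smul, smul_eq_mul, div_mul_cancel₀ y hi0]
  have hkerphi : Module.finrank Fqm (LinearMap.ker (grwPhi (Fqm := Fqm) c)) + 1 = n := by
    have hrn := LinearMap.finrank_range_add_finrank_ker (grwPhi (Fqm := Fqm) c)
    rw [hphi_surj, finrank_top, Module.finrank_self, Module.finrank_fin_fun] at hrn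
    omega
  -- the sup of the span with the hyperplane is everything
  have hsup : Submodule.span Fqm (Set.range b) ⊔ LinearMap.ker (grwPhi (Fqm := Fqm) c) = ⊤ := by
    apply Submodule.eq_top_of_finrank_eq
    rw [Module.finrank_fin_fun]
    have hlt : LinearMap.ker (grwPhi (Fqm := Fqm) c) <
        Submodule.span Fqm (Set.range b) ⊔ LinearMap.ker (grwPhi (Fqm := Fqm) c) := by
      rw [lt_iff_le_and_ne]
      refine ⟨le_sup_right, fun he => hi0 ?_⟩
      have : b i0 ∈ LinearMap.ker (grwPhi (Fqm := Fqm) c) := by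
        rw [he]
        exact Submodule.mem_sup_left (Submodule.subset_span ⟨i0, rfl⟩)
      exact LinearMap.mem_ker.mp this
    have h1 := Submodule.finrank_lt_finrank_of_lt hlt
    have h2 := Submodule.finrank_le
      (Submodule.span Fqm (Set.range b) ⊔ LinearMap.ker (grwPhi (Fqm := Fqm) c))
    rw [Module.finrank_fin_fun] at h2
    omega
  -- hence the intersection K has dimension r
  have hKrank : Module.finrank Fqm
      ↥(Submodule.span Fqm (Set.range b) ⊓ LinearMap.ker (grwPhi (Fqm := Fqm) c)) = r := by
    have h3 := Submodule.finrank_sup_add_finrank_inf_eq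
      (Submodule.span Fqm (Set.range b)) (LinearMap.ker (grwPhi (Fqm := Fqm) c))
    rw [hsup, finrank_top, Module.finrank_fin_fun, hDrank] at h3
    omega
  obtain ⟨bK⟩ : Nonempty (Module.Basis (Fin r) Fqm
      ↥(Submodule.span Fqm (Set.range b) ⊓ LinearMap.ker (grwPhi (Fqm := Fqm) c))) :=
    ⟨Module.finBasisOfFinrankEq Fqm _ hKrank⟩
  have hbKD : ∀ i, ((bK i : Fin n → Fqm)) ∈ Submodule.span Fqm (Set.range b) :=
    fun i => (bK i).2.1
  have hbKker : ∀ i, grwPhi (Fqm := Fqm) c ((bK i : Fin n → Fqm)) = 0 :=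
    fun i => LinearMap.mem_ker.mp (bK i).2.2
  refine ⟨fun i => (bK i : Fin n → Fqm), ?_, ?_, ?_⟩
  · exact bK.linearIndependent.map'
      (Submodule.span Fqm (Set.range b) ⊓ LinearMap.ker (grwPhi (Fqm := Fqm) c)).subtype
      (Submodule.ker_subtype _)
  · rw [Submodule.span_le]
    rintro x ⟨i, rfl⟩
    exact hle (hbKD i)
  · apply Submodule.finrank_lt_finrank_of_lt
    rw [lt_iff_le_and_ne]
    constructor
    · intro c' hc'
      rw [grwKer_iff] at hc' ⊢
      rw [Submodule.span_le]
      rintro x ⟨i, rfl⟩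
      exact hc' (hbKD i)
    · intro heq
      apply hc
      rw [heq, LinearMap.mem_ker]
      funext i
      show grwPhi (Fqm := Fqm) c ((bK i : Fin n → Fqm)) = 0
      exact hbKker i

end Aux

/-- The `r`-th generalized rank weight (minimum q-support dimension of `r`-dim subcodes). -/
noncomputable def genRankWeight (Fq : Type*) {Fqm : Type*} [Field Fq] [Field Fqm]
    [Algebra Fq Fqm] {n : ℕ} (C : Submodule Fqm (Fin n → Fqm)) (r : ℕ) : ℕ :=
  sInf { w | ∃ b : Fin r → Fin n → Fqm, LinearIndependent Fqm b ∧
    Submodule.span Fqm (Set.range b) ≤ C ∧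
    w = Module.finrank Fq
      (Submodule.span Fq (Set.range fun j : Fin n => fun i : Fin r => b i j)) }

/-- Non-degenerate: the columns of a generator matrix are `F_q`-linearly independent;
equivalently, no nonzero `F_q`-linear combination of coordinates vanishes on all of `C`. -/
def Nondeg (Fq : Type*) {Fqm : Type*} [Field Fq] [Field Fqm] [Algebra Fq Fqm] {n : ℕ}
    (C : Submodule Fqm (Fin n → Fqm)) : Prop :=
  ∀ c : Fin n → Fq, (∀ x ∈ C, ∑ j, algebraMap Fq Fqm (c j) * x j = 0) → c = 0

/-- Monotonicity of generalized rank weights: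
`0 < d_1(C) < d_2(C) < ⋯ < d_k(C) = n`. -/
theorem genRankWeight_strictMono
    {Fq Fqm : Type*} [Field Fq] [Field Fqm] [Algebra Fq Fqm]
    {n k : ℕ} (hk : 0 < k) (C : Submodule Fqm (Fin n → Fqm))
    (hCk : Module.finrank Fqm C = k) (hnd : Nondeg Fq C) :
    0 < genRankWeight Fq C 1 ∧
    (∀ r : ℕ, 1 ≤ r → r < k → genRankWeight Fq C r < genRankWeight Fq C (r + 1)) ∧
    genRankWeight Fq C k = n := by
  haveI : FiniteDimensional Fqm C :=
    Module.finite_of_finrank_pos (by rw [hCk]; exact hk)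
  have hne : ∀ r : ℕ, r ≤ k →
      {w | ∃ b : Fin r → Fin n → Fqm, LinearIndependent Fqm b ∧
        Submodule.span Fqm (Set.range b) ≤ C ∧
        w = Module.finrank Fq
          (Submodule.span Fq (Set.range fun j : Fin n => fun i : Fin r => b i j))}.Nonempty := by
    intro r hr
    obtain ⟨b, hb1, hb2⟩ := grw_set_nonempty C hCk hk r hr
    exact ⟨_, b, hb1, hb2, rfl⟩
  refine ⟨?_, ?_, ?_⟩
  · -- 0 < d_1
    obtain ⟨b, hLI, -, hw⟩ := Nat.sInf_mem (hne 1 hk)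
    rw [genRankWeight, hw]
    by_contra h
    push_neg at h
    haveI : FiniteDimensional Fq
        (Submodule.span Fq (Set.range fun j : Fin n => fun i : Fin 1 => b i j)) :=
      FiniteDimensional.span_of_finite Fq (Set.finite_range _)
    have h' : Submodule.span Fq (Set.range fun j : Fin n => fun i : Fin 1 => b i j) = ⊥ := by
      rw [← Submodule.finrank_eq_zero]
      clear hw hne
      omega
    have hb0 : b 0 = 0 := by
      funext j
      have hmem : (fun i : Fin 1 => b i j) ∈
          Submodule.span Fq (Set.range fun j : Fin n => fun i : Fin 1 => b i j) :=
        Submodule.subset_span ⟨j, rfl⟩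
      rw [h', Submodule.mem_bot] at hmem
      exact congrFun hmem 0
    exact hLI.ne_zero 0 hb0
  · -- strict monotonicity
    intro r hr1 hrk
    obtain ⟨b, hLI, hle, hw⟩ := Nat.sInf_mem (hne (r + 1) hrk)
    obtain ⟨b', hb'LI, hb'le, hlt⟩ := grw_step (Fq := Fq) C r b hLI hle
    have hrn1 := grwPsi_rank_nullity (Fq := Fq) (r + 1) b
    have hrn2 := grwPsi_rank_nullity (Fq := Fq) r b'
    have hR : genRankWeight Fq C (r + 1) = Module.finrank Fq
        (Submodule.span Fq (Set.range fun j : Fin n => fun i : Fin (r + 1) => b i j)) := hw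
    have hL : genRankWeight Fq C r ≤ Module.finrank Fq
        (Submodule.span Fq (Set.range fun j : Fin n => fun i : Fin r => b' i j)) :=
      Nat.sInf_le ⟨b', hb'LI, hb'le, rfl⟩
    clear hw hne
    omega
  · -- d_k = n
    obtain ⟨b, hLI, hle, hw⟩ := Nat.sInf_mem (hne k le_rfl)
    have hR : genRankWeight Fq C k = Module.finrank Fq
        (Submodule.span Fq (Set.range fun j : Fin n => fun i : Fin k => b i j)) := hw
    rw [hR]
    have hspan : Submodule.span Fqm (Set.range b) = C := by
      apply Submodule.eq_of_le_of_finrank_le hle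
      rw [hCk, finrank_span_eq_card hLI, Fintype.card_fin]
    have hker : LinearMap.ker (grwPsi (Fq := Fq) k b) = ⊥ := by
      rw [eq_bot_iff]
      intro c hc
      rw [grwKer_iff, hspan] at hc
      have hc0 : c = 0 := by
        apply hnd
        intro x hx
        exact hc hx
      simp [hc0]
    have hrn := grwPsi_rank_nullity (Fq := Fq) k b
    rw [hker, finrank_bot] at hrn
    clear hw hne
    omega
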